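/- Let ψ : A → Set Λ be a semi-transition map on a commutative ring A and set S = {a ∈ A | ψ(a) = ∅}. Then: S is a multiplicative submonoid of A not containing 0; the canonical ring homomorphism A → A_S into the localization A_S = S⁻¹A is injective; the assignment φ(a/t) = ψ(a) (for a ∈ A, t ∈ S) is a well-defined map φ : A_S → Set Λ which is a semi-transition map on A_S; and for every u ∈ A_S, u is a unit of A_S if and only if φ(u) = ∅. -/

import Mathlib

/-- A semi-transition map on a commutative ring `A` with values in subsets of a
nonempty set `Λ`. -/
structure IsSemiTransition {A : Type*} [CommRing A] {Λ : Type*} (ψ : A → Set Λ) : Prop where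
  nonempty : Nonempty Λ
  map_mul : ∀ a b : A, ψ (a * b) = ψ a ∪ ψ b
  map_one : ψ 1 = ∅
  eq_univ_iff : ∀ a : A, ψ a = Set.univ ↔ a = 0
  inter_eq : ∀ a b : A, ∃ c ∈ Ideal.span {a, b}, ψ a ∩ ψ b = ψ c ∧ ψ c ⊆ ψ (a + b)
  principal : ∀ a b : A, ψ a ∩ ψ b = ∅ →
    ∃ m n : ℕ, 0 < m ∧ 0 < n ∧ (Ideal.span {a ^ m, b ^ n} : Ideal A).IsPrincipal

/-- Theorem: for a semi-transition map `ψ` on `A`, the set `S = {a | ψ a = ∅}` is a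
multiplicative submonoid of `A` not containing `0`; the canonical map `A → A_S` is
injective; `φ (a / t) = ψ a` gives a well-defined semi-transition map on `A_S`; and
`u ∈ A_S` is a unit iff `φ u = ∅`. -/
theorem localization_semi_transition {A : Type*} [CommRing A] {Λ : Type*}
    (ψ : A → Set Λ) (hψ : IsSemiTransition ψ) :
    ((1 : A) ∈ {a : A | ψ a = ∅} ∧
      (∀ a b : A, ψ a = ∅ → ψ b = ∅ → ψ (a * b) = ∅) ∧
      (0 : A) ∉ {a : A | ψ a = ∅}) ∧
    ∀ S : Submonoid A, (S : Set A) = {a : A | ψ a = ∅} →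
      Function.Injective (algebraMap A (Localization S)) ∧
      ∃ φ : Localization S → Set Λ,
        (∀ (a : A) (t : S), φ (Localization.mk a t) = ψ a) ∧
        IsSemiTransition φ ∧
        ∀ u : Localization S, IsUnit u ↔ φ u = ∅ := by
  obtain ⟨x₀⟩ := hψ.nonempty
  have hzero : ψ (0 : A) = Set.univ := (hψ.eq_univ_iff 0).mpr rfl
  constructor
  · refine ⟨hψ.map_one, fun a b ha hb => by rw [hψ.map_mul, ha, hb, Set.empty_union], ?_⟩
    intro h
    have : x₀ ∈ ψ (0 : A) := hzero ▸ Set.mem_univ x₀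
    rw [Set.mem_setOf_eq.mp h] at this
    exact this
  intro S hS
  have hmemS : ∀ a : A, a ∈ S ↔ ψ a = ∅ := fun a => by
    rw [← Submonoid.mem_carrier]
    constructor
    · intro h; have : a ∈ {a : A | ψ a = ∅} := hS ▸ h; exact this
    · intro h; show a ∈ (S : Set A); rw [hS]; exact h
  have hempty : ∀ t : S, ψ (t : A) = ∅ := fun t => (hmemS t).mp t.2
  -- elements of S are non-zero-divisors
  have hle : S ≤ nonZeroDivisors A := by
    intro t ht
    rw [mem_nonZeroDivisors_iff_right]
    intro x hx
    have : ψ (x * t) = Set.univ := by rw [hx, hzero]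
    rw [hψ.map_mul, (hmemS t).mp ht, Set.union_empty] at this
    exact (hψ.eq_univ_iff x).mp this
  refine ⟨IsLocalization.injective (Localization S) hle, ?_⟩
  -- the well-defined map φ
  have hwd : ∀ {a c : A} {b d : S}, Localization.r S (a, b) (c, d) → ψ a = ψ c := by
    intro a c b d h
    obtain ⟨u, hu⟩ := Localization.r_iff_exists.mp h
    have := congrArg ψ hu
    simp only [hψ.map_mul, hempty, Set.empty_union] at this
    exact this
  set φ : Localization S → Set Λ := fun x => Localization.liftOn x (fun a _ => ψ a) hwd with hφdef
  have hmk : ∀ (a : A) (t : S), φ (Localization.mk a t) = ψ a :=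
    fun a t => Localization.liftOn_mk _ _ a t
  have mkeq : ∀ (a b : A) (s t : S), (t : A) * a = (s : A) * b →
      Localization.mk a s = Localization.mk b t := fun a b s t h =>
    Localization.mk_eq_mk_iff.mpr (Localization.r_iff_exists.mpr ⟨1, by simp only [Submonoid.coe_one, one_mul]; exact h⟩)
  have htrick : ∀ (t : S) (a : A), ψ ((t : A) * a) = ψ a := fun t a => by
    rw [hψ.map_mul, hempty, Set.empty_union]
  have hφmul : ∀ x y : Localization S, φ (x * y) = φ x ∪ φ y := by
    intro x y
    refine Localization.induction_on₂ x y ?_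
    rintro ⟨a, s⟩ ⟨b, t⟩
    rw [Localization.mk_mul, hmk, hmk, hmk, hψ.map_mul]
  have hφone : φ 1 = ∅ := by rw [← Localization.mk_one, hmk, hψ.map_one]
  refine ⟨φ, hmk, ⟨hψ.nonempty, hφmul, hφone, ?_, ?_, ?_⟩, ?_⟩
  · -- eq_univ_iff
    intro x
    refine Localization.induction_on x ?_
    rintro ⟨a, s⟩
    rw [hmk]
    constructor
    · intro h
      rw [(hψ.eq_univ_iff a).mp h]
      exact Localization.mk_zero s
    · intro h
      rw [← Localization.mk_zero s] at h
      obtain ⟨u, hu⟩ := Localization.r_iff_exists.mp (Localization.mk_eq_mk_iff.mp h)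
      have h2 : ψ ((u : A) * ((s : A) * a)) = Set.univ := by
        rw [hu, mul_zero, mul_zero, hzero]
      rwa [htrick, htrick] at h2
  · -- inter_eq
    intro x y
    refine Localization.induction_on₂ x y ?_
    rintro ⟨a, s⟩ ⟨b, t⟩
    obtain ⟨c, hcmem, hceq, hcsub⟩ := hψ.inter_eq ((t : A) * a) ((s : A) * b)
    obtain ⟨p, q, hpq⟩ := Ideal.mem_span_pair.mp hcmem
    refine ⟨Localization.mk c (s * t), ?_, ?_, ?_⟩
    · apply Ideal.mem_span_pair.mpr
      refine ⟨Localization.mk p 1, Localization.mk q 1, ?_⟩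
      rw [Localization.mk_mul, Localization.mk_mul, Localization.add_mk]
      apply mkeq
      push_cast
      rw [← hpq]
      ring
    · rw [hmk, hmk, hmk, ← htrick t a, ← htrick s b, hceq]
    · rw [Localization.add_mk, hmk, hmk, add_comm]
      exact hcsub
  · -- principal
    intro x y h
    induction x using Localization.induction_on with | H p => ?_
    induction y using Localization.induction_on with | H q => ?_
    obtain ⟨a, s⟩ := p
    obtain ⟨b, t⟩ := q
    rw [hmk, hmk] at h
    have h2 : ψ ((t : A) * a) ∩ ψ ((s : A) * b) = ∅ := by rw [htrick, htrick]; exact h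
    obtain ⟨m, n, hm, hn, hprin⟩ := hψ.principal _ _ h2
    obtain ⟨g, hg⟩ := hprin
    refine ⟨m, n, hm, hn, ⟨⟨Localization.mk g 1, ?_⟩⟩⟩
    have e1 : Ideal.span {Localization.mk a s ^ m, Localization.mk b t ^ n} =
        Ideal.map (algebraMap A (Localization S))
          (Ideal.span {((t : A) * a) ^ m, ((s : A) * b) ^ n}) := by
      rw [Ideal.map_span, Set.image_insert_eq, Set.image_singleton,
        ← Localization.mk_one_eq_algebraMap, ← Localization.mk_one_eq_algebraMap]
      apply le_antisymm <;> rw [Ideal.span_le] <;> rintro z hz <;>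
        simp only [Set.mem_insert_iff, Set.mem_singleton_iff] at hz <;>
        rcases hz with rfl | rfl <;> rw [SetLike.mem_coe] <;> apply Ideal.mem_span_pair.mpr
      · refine ⟨Localization.mk 1 ((s * t) ^ m), 0, ?_⟩
        rw [zero_mul, add_zero, Localization.mk_pow, Localization.mk_mul]
        apply mkeq
        push_cast
        ring
      · refine ⟨0, Localization.mk 1 ((s * t) ^ n), ?_⟩
        rw [zero_mul, zero_add, Localization.mk_pow, Localization.mk_mul]
        apply mkeq
        push_cast
        ring
      · refine ⟨Localization.mk ((t : A) ^ m * (s : A) ^ m) 1, 0, ?_⟩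
        rw [zero_mul, add_zero, Localization.mk_pow, Localization.mk_mul]
        apply mkeq
        push_cast
        ring
      · refine ⟨0, Localization.mk ((s : A) ^ n * (t : A) ^ n) 1, ?_⟩
        rw [zero_mul, zero_add, Localization.mk_pow, Localization.mk_mul]
        apply mkeq
        push_cast
        ring
    rw [e1, hg, Ideal.submodule_span_eq, Ideal.map_span, Set.image_singleton,
      ← Localization.mk_one_eq_algebraMap, Ideal.submodule_span_eq]
  · -- units
    intro u
    refine Localization.induction_on u ?_
    rintro ⟨a, s⟩
    rw [hmk]
    constructor
    · intro hu
      obtain ⟨v, hv⟩ := isUnit_iff_exists_inv.mp hu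
      have h2 := congrArg φ hv
      rw [hφmul, hmk, hφone] at h2
      exact (Set.union_empty_iff.mp h2).1
    · intro ha
      have haS : a ∈ S := (hmemS a).mpr ha
      apply isUnit_iff_exists_inv.mpr
      refine ⟨Localization.mk (s : A) ⟨a, haS⟩, ?_⟩
      rw [Localization.mk_mul, ← Localization.mk_one]
      apply mkeq
      push_cast
      ring
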